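/- Let N ≥ 8 be an integer divisible by 4. If β ∈ ℝ^{N/4} satisfies ψ_odd^{(i,j,k,l)}(β) = 0 for all (i,j,k,l) ∈ S_1, then ψ_odd^{(0,j,k,l)}(β) = 0 for all integers j, k, l with 0 ≤ j ≤ k ≤ l ≤ N/2 − 1 and j + k + l = N. -/

import Mathlib

/-- `c_α = cos(απ/N)` -/
noncomputable def cc (N : ℕ) (a : ℤ) : ℝ := Real.cos (a * Real.pi / N)

/-- `ψ_odd^{(i,j,k,l)}(β) = ∑_{s=1}^{N/4} β_s c_{(2s−1)i} c_{(2s−1)j} c_{(2s−1)k} c_{(2s−1)l}`;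
the vector `β : Fin (N/4) → ℝ` is 0-indexed. -/
noncomputable def psiOdd (N : ℕ) (β : Fin (N / 4) → ℝ) (i j k l : ℤ) : ℝ :=
  ∑ s : Fin (N / 4),
    β s * (cc N ((2 * (s : ℕ) + 1 : ℤ) * i) * cc N ((2 * (s : ℕ) + 1 : ℤ) * j) *
      cc N ((2 * (s : ℕ) + 1 : ℤ) * k) * cc N ((2 * (s : ℕ) + 1 : ℤ) * l))

/-- `S₁ = {(0, n+1, N/2−n, N/2−1) : 1 ≤ n ≤ N/4−1}` -/
def S1set (N : ℕ) : Set (ℤ × ℤ × ℤ × ℤ) :=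
  {x | ∃ n : ℤ, 1 ≤ n ∧ n ≤ (N : ℤ) / 4 - 1 ∧
    x = (0, n + 1, (N : ℤ) / 2 - n, (N : ℤ) / 2 - 1)}

/-- auxiliary: `F(x) = ∑ β_s cos(2(2s+1)xπ/N)` -/
noncomputable def Faux (N : ℕ) (β : Fin (N / 4) → ℝ) (x : ℤ) : ℝ :=
  ∑ s : Fin (N / 4), β s * Real.cos (2 * (2 * (s : ℕ) + 1) * (x : ℝ) * Real.pi / N)

lemma cos_prod (t : ℤ) (A B C : ℝ) (h : A + B + C = (2 * t + 1) * Real.pi) :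
    Real.cos A * Real.cos B * Real.cos C
      = -(1 + Real.cos (2 * A) + Real.cos (2 * B) + Real.cos (2 * C)) / 4 := by
  have hC : C = (Real.pi - (A + B)) + t * (2 * Real.pi) := by linarith
  have h1 : Real.cos C = -Real.cos (A + B) := by
    rw [hC, Real.cos_add_int_mul_two_pi, Real.cos_pi_sub]
  have h2 : Real.cos (2 * C) = Real.cos (2 * (A + B)) := by
    have h3 : 2 * C = (-(2 * (A + B))) + ((2 * t + 1 : ℤ) : ℝ) * (2 * Real.pi) := by
      push_cast; linarith
    rw [h3, Real.cos_add_int_mul_two_pi, Real.cos_neg]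
  rw [h1, h2]
  have hA := Real.sin_sq_add_cos_sq A
  have hB := Real.sin_sq_add_cos_sq B
  rw [Real.cos_two_mul, Real.cos_two_mul, Real.cos_two_mul, Real.cos_add]
  nlinarith [hA, hB]

lemma psi_eq (N : ℕ) (hN : 0 < N) (β : Fin (N / 4) → ℝ) (j k l : ℤ)
    (h : j + k + l = (N : ℤ)) :
    psiOdd N β 0 j k l = -(Faux N β 0 + Faux N β j + Faux N β k + Faux N β l) / 4 := by
  unfold psiOdd Faux
  rw [← Finset.sum_add_distrib, ← Finset.sum_add_distrib, ← Finset.sum_add_distrib,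
    ← Finset.sum_neg_distrib, Finset.sum_div]
  apply Finset.sum_congr rfl
  intro s _
  have hNR : (N : ℝ) ≠ 0 := by positivity
  have hsum : ((2 * (s : ℕ) + 1 : ℝ) * j * Real.pi / N)
      + ((2 * (s : ℕ) + 1 : ℝ) * k * Real.pi / N)
      + ((2 * (s : ℕ) + 1 : ℝ) * l * Real.pi / N)
      = (2 * ((s : ℕ) : ℤ) + 1) * Real.pi := by
    have hjkl : (j : ℝ) + k + l = (N : ℝ) := by exact_mod_cast h
    field_simp
    linear_combination (2 * ((s : ℕ) : ℝ) + 1) * hjkl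
  have key := cos_prod ((s : ℕ) : ℤ) _ _ _ hsum
  unfold cc
  rw [mul_zero]
  push_cast
  rw [show ((0 : ℝ) * Real.pi / N) = 0 by ring, Real.cos_zero]
  rw [one_mul, key]
  rw [show (2 : ℝ) * (2 * (s : ℕ) + 1) * 0 * Real.pi / N = 0 by ring, Real.cos_zero]
  ring_nf

lemma Faux_anti (N : ℕ) (q : ℕ) (hq : N = 4 * q) (hq0 : 0 < q) (β : Fin (N / 4) → ℝ)
    (x : ℤ) : Faux N β (2 * q - x) = -Faux N β x := by
  unfold Faux
  rw [← Finset.sum_neg_distrib]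
  apply Finset.sum_congr rfl
  intro s _
  have hqR : (q : ℝ) ≠ 0 := by positivity
  have hang : (2 : ℝ) * (2 * (s : ℕ) + 1) * ((2 * (q : ℤ) - x : ℤ) : ℝ) * Real.pi / N
      = (Real.pi - 2 * (2 * (s : ℕ) + 1) * (x : ℝ) * Real.pi / N)
        + ((s : ℕ) : ℤ) * (2 * Real.pi) := by
    subst hq
    push_cast
    field_simp
    ring
  rw [hang, Real.cos_add_int_mul_two_pi, Real.cos_pi_sub]
  ring

theorem psiOdd_zero_on_T1_of_zero_on_S1 (N : ℕ) (hN4 : 4 ∣ N) (hN8 : 8 ≤ N)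
    (β : Fin (N / 4) → ℝ)
    (hβ : ∀ x ∈ S1set N, psiOdd N β x.1 x.2.1 x.2.2.1 x.2.2.2 = 0) :
    ∀ j k l : ℤ, 0 ≤ j → j ≤ k → k ≤ l → l ≤ (N : ℤ) / 2 - 1 →
      j + k + l = (N : ℤ) → psiOdd N β 0 j k l = 0 := by
  obtain ⟨q, hq⟩ := hN4
  have hq2 : 2 ≤ q := by omega
  have hq0 : 0 < q := by omega
  have hN0 : 0 < N := by omega
  have hNZ : (N : ℤ) = 4 * q := by exact_mod_cast hq
  have hdiv2 : (N : ℤ) / 2 = 2 * q := by omega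
  have hdiv4 : (N : ℤ) / 4 = q := by omega
  set F : ℤ → ℝ := Faux N β with hF
  set D : ℝ := F 1 - F 0 with hD
  -- the S1 relations give F(n+1) = F n + D for 1 ≤ n ≤ q-1
  have hrel : ∀ n : ℤ, 1 ≤ n → n ≤ (q : ℤ) - 1 → F (n + 1) = F n + D := by
    intro n h1 h2
    have hmem : ((0 : ℤ), n + 1, (N : ℤ) / 2 - n, (N : ℤ) / 2 - 1) ∈ S1set N :=
      ⟨n, h1, by omega, rfl⟩
    have h0 := hβ _ hmem
    simp only at h0
    rw [psi_eq N hN0 β _ _ _ (by omega)] at h0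
    rw [hdiv2] at h0
    have ha1 : Faux N β (2 * q - n) = -Faux N β n := Faux_anti N q hq hq0 β n
    have ha2 : Faux N β (2 * q - 1) = -Faux N β 1 := Faux_anti N q hq hq0 β 1
    rw [ha1, ha2] at h0
    have : Faux N β 0 + Faux N β (n + 1) - Faux N β n - Faux N β 1 = 0 := by
      field_simp at h0; linarith
    simp only [hF, hD]
    linarith
  -- linear growth on [0, q]
  have hlin : ∀ n : ℕ, (n : ℤ) ≤ q → F n = F 0 + n * D := by
    intro n
    induction n with
    | zero => intro _; simp
    | succ m ih =>
      intro hm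
      rcases Nat.eq_zero_or_pos m with h | h
      · subst h; simp [hD]
      · have hFm : F m = F 0 + m * D := ih (by omega)
        have := hrel m (by exact_mod_cast h) (by omega)
        push_cast
        push_cast at this hFm
        rw [show ((m : ℤ) + 1 : ℤ) = (m : ℤ) + 1 from rfl] at this
        rw [this, hFm]
        ring
  have hlin' : ∀ x : ℤ, 0 ≤ x → x ≤ (q : ℤ) → F x = F 0 + x * D := by
    intro x hx0 hxq
    obtain ⟨m, rfl⟩ := Int.eq_ofNat_of_zero_le hx0
    exact_mod_cast hlin m (by exact_mod_cast hxq)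
  -- F q = 0
  have hFq : F q = 0 := by
    have := Faux_anti N q hq hq0 β q
    rw [show (2 * (q : ℤ) - q) = (q : ℤ) by ring] at this
    simp only [hF]
    linarith [this]
  have hF0 : F 0 = -(q : ℝ) * D := by
    have := hlin' q (by positivity) le_rfl
    rw [hFq] at this
    push_cast at this
    linarith
  -- full linear formula on [0, 2q]
  have hall : ∀ x : ℤ, 0 ≤ x → x ≤ 2 * (q : ℤ) → F x = ((x : ℝ) - q) * D := by
    intro x hx0 hx2
    rcases le_or_gt x q with h | h
    · rw [hlin' x hx0 h, hF0]; ring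
    · have ha : F (2 * q - x) = -F x := Faux_anti N q hq hq0 β x
      have h2 : F (2 * (q : ℤ) - x) = F 0 + ((2 * (q : ℤ) - x : ℤ) : ℝ) * D :=
        hlin' _ (by omega) (by omega)
      rw [h2, hF0] at ha
      push_cast at ha ⊢
      linarith
  intro j k l hj hjk hkl hl hjkl
  rw [psi_eq N hN0 β j k l hjkl]
  rw [show Faux N β 0 = F 0 from rfl, show Faux N β j = F j from rfl,
    show Faux N β k = F k from rfl, show Faux N β l = F l from rfl]
  have hFj : F j = ((j : ℝ) - q) * D := hall j hj (by omega)
  have hFk : F k = ((k : ℝ) - q) * D := hall k (by omega) (by omega)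
  have hFl : F l = ((l : ℝ) - q) * D := hall l (by omega) (by omega)
  have hjklR : (j : ℝ) + k + l = 4 * q := by exact_mod_cast hjkl.trans hNZ
  rw [hFj, hFk, hFl, hF0]
  linear_combination (-D / 4 : ℝ) * hjklR
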